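/- Fix ε ∈ (0, 1/3]. There exist a constant K > 0 and an integer N₀, both depending only on ε, such that for every n ≥ N₀ and all triples (t₁,t₂,t₃) and (m₁,m₂,m₃) in [0,1]³ satisfying t₂ − t₁ ≥ ε, t₃ − t₂ ≥ ε, m₂ − m₁ ≥ ε, m₃ − m₂ ≥ ε, one has |ũ_n(t₁,t₂,t₃)ᵀ ũ_n(m₁,m₂,m₃) − κ(t₁,t₂,t₃; m₁,m₂,m₃)| ≤ K/n. -/

import Mathlib

open BigOperators MeasureTheory

/-- `k(t) = ⌊nt⌋ + 1`. -/
noncomputable def kIdx (n : ℕ) (t : ℝ) : ℕ := ⌊(n : ℝ) * t⌋₊ + 1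

/-- The step function `u(x; t₁,t₂,t₃)` equal to `-1/(t₂-t₁)` on `[t₁,t₂)`,
`1/(t₃-t₂)` on `[t₂,t₃)` and `0` otherwise. -/
noncomputable def uStep (t₁ t₂ t₃ x : ℝ) : ℝ :=
  if t₁ ≤ x ∧ x < t₂ then -1 / (t₂ - t₁)
  else if t₂ ≤ x ∧ x < t₃ then 1 / (t₃ - t₂)
  else 0

/-- `κ(t₁,t₂,t₃; m₁,m₂,m₃) = ∫₀¹ u(x;t) u(x;m) dx`. -/
noncomputable def kappa (t₁ t₂ t₃ m₁ m₂ m₃ : ℝ) : ℝ :=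
  ∫ x in (0 : ℝ)..1, uStep t₁ t₂ t₃ x * uStep m₁ m₂ m₃ x

/-- The discrete contrast vector `ũ_n(t₁,t₂,t₃) ∈ ℝⁿ`: its `j`-th entry (1-indexed)
equals `-√n/(k(t₂)-k(t₁))` if `k(t₁) ≤ j < k(t₂)`, `√n/(k(t₃)-k(t₂))` if
`k(t₂) ≤ j < k(t₃)`, and `0` otherwise. -/
noncomputable def uVec (n : ℕ) (t₁ t₂ t₃ : ℝ) : Fin n → ℝ := fun j =>
  if kIdx n t₁ ≤ (j : ℕ) + 1 ∧ (j : ℕ) + 1 < kIdx n t₂ then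
    -Real.sqrt n / ((kIdx n t₂ : ℝ) - (kIdx n t₁ : ℝ))
  else if kIdx n t₂ ≤ (j : ℕ) + 1 ∧ (j : ℕ) + 1 < kIdx n t₃ then
    Real.sqrt n / ((kIdx n t₃ : ℝ) - (kIdx n t₂ : ℝ))
  else 0

noncomputable def ov (a b c d : ℝ) : ℝ := max 0 (min b d - max a c)

noncomputable def Fq (a b c d e f : ℝ) : ℝ :=
  ov a b d e / (b - a) / (e - d) - ov a b e f / (b - a) / (f - e)
    - ov b c d e / (c - b) / (e - d) + ov b c e f / (c - b) / (f - e)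

lemma volume_Ico_inter (a b : ℝ) (ha : 0 ≤ a) (hb : b ≤ 1) :
    (volume (Set.Ioc 0 1 ∩ Set.Ico a b)).toReal = max 0 (b - a) := by
  rcases le_or_gt b a with h | h
  · rw [Set.Ico_eq_empty (not_lt.2 h), Set.inter_empty]
    simp [max_eq_left (by linarith : b - a ≤ 0)]
  · have h1 : volume (Set.Ioc 0 1 ∩ Set.Ico a b) = ENNReal.ofReal (b - a) := by
      apply le_antisymm
      · calc volume (Set.Ioc 0 1 ∩ Set.Ico a b) ≤ volume (Set.Ico a b) :=
              measure_mono Set.inter_subset_right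
          _ = ENNReal.ofReal (b - a) := Real.volume_Ico
      · calc ENNReal.ofReal (b - a) = volume (Set.Ioo a b) := Real.volume_Ioo.symm
          _ ≤ _ := by
              apply measure_mono
              intro x hx
              rw [Set.mem_Ioo] at hx
              exact ⟨⟨lt_of_le_of_lt ha hx.1, hx.2.le.trans hb⟩, ⟨hx.1.le, hx.2⟩⟩
    rw [h1, ENNReal.toReal_ofReal (by linarith)]
    exact (max_eq_right (by linarith)).symm

lemma intInd (a b : ℝ) (ha : 0 ≤ a) (hb : b ≤ 1) :
    ∫ x in (0:ℝ)..1, (Set.Ico a b).indicator (1 : ℝ → ℝ) x = max 0 (b - a) := by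
  rw [intervalIntegral.integral_of_le zero_le_one,
    MeasureTheory.setIntegral_indicator measurableSet_Ico]
  simp only [Pi.one_apply]
  rw [MeasureTheory.setIntegral_const, smul_eq_mul, mul_one]
  exact volume_Ico_inter a b ha hb

lemma indII (a b : ℝ) : IntervalIntegrable ((Set.Ico a b).indicator (1 : ℝ → ℝ)) volume 0 1 := by
  apply MeasureTheory.Integrable.intervalIntegrable
  rw [MeasureTheory.integrable_indicator_iff measurableSet_Ico]
  apply (MeasureTheory.integrableOn_const_iff (C := (1:ℝ)) (by simp)).2
  right
  rw [Real.volume_Ico]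
  exact ENNReal.ofReal_lt_top

lemma uStep_eq (t₁ t₂ t₃ x : ℝ) :
    uStep t₁ t₂ t₃ x = (-1 / (t₂ - t₁)) * (Set.Ico t₁ t₂).indicator (1 : ℝ → ℝ) x
      + (1 / (t₃ - t₂)) * (Set.Ico t₂ t₃).indicator (1 : ℝ → ℝ) x := by
  unfold uStep
  rw [Set.indicator_apply, Set.indicator_apply]
  simp only [Set.mem_Ico, Pi.one_apply]
  split_ifs with h1 h2 h2
  · exfalso; linarith [h1.2, h2.1]
  · ring
  · ring
  · ring

lemma uStep_mul (t₁ t₂ t₃ m₁ m₂ m₃ x : ℝ) :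
    uStep t₁ t₂ t₃ x * uStep m₁ m₂ m₃ x =
      ((-1 / (t₂ - t₁)) * (-1 / (m₂ - m₁))) * (Set.Ico (max t₁ m₁) (min t₂ m₂)).indicator (1 : ℝ → ℝ) x
      + ((-1 / (t₂ - t₁)) * (1 / (m₃ - m₂))) * (Set.Ico (max t₁ m₂) (min t₂ m₃)).indicator (1 : ℝ → ℝ) x
      + ((1 / (t₃ - t₂)) * (-1 / (m₂ - m₁))) * (Set.Ico (max t₂ m₁) (min t₃ m₂)).indicator (1 : ℝ → ℝ) x
      + ((1 / (t₃ - t₂)) * (1 / (m₃ - m₂))) * (Set.Ico (max t₂ m₂) (min t₃ m₃)).indicator (1 : ℝ → ℝ) x := by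
  rw [uStep_eq, uStep_eq, ← Set.Ico_inter_Ico, ← Set.Ico_inter_Ico, ← Set.Ico_inter_Ico,
    ← Set.Ico_inter_Ico, Set.inter_indicator_one, Set.inter_indicator_one,
    Set.inter_indicator_one, Set.inter_indicator_one]
  simp only [Pi.mul_apply]
  ring

lemma kappa_closed (t₁ t₂ t₃ m₁ m₂ m₃ : ℝ) (h1 : 0 ≤ t₁) (h2 : 0 ≤ t₂) (h3 : t₂ ≤ 1)
    (h4 : t₃ ≤ 1) (h5 : 0 ≤ m₁) (h6 : 0 ≤ m₂) (h7 : m₂ ≤ 1) (h8 : m₃ ≤ 1) :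
    kappa t₁ t₂ t₃ m₁ m₂ m₃ = Fq t₁ t₂ t₃ m₁ m₂ m₃ := by
  unfold kappa
  have hrw : ∀ x : ℝ, uStep t₁ t₂ t₃ x * uStep m₁ m₂ m₃ x =
      ((-1 / (t₂ - t₁)) * (-1 / (m₂ - m₁))) * (Set.Ico (max t₁ m₁) (min t₂ m₂)).indicator (1 : ℝ → ℝ) x
      + ((-1 / (t₂ - t₁)) * (1 / (m₃ - m₂))) * (Set.Ico (max t₁ m₂) (min t₂ m₃)).indicator (1 : ℝ → ℝ) x
      + ((1 / (t₃ - t₂)) * (-1 / (m₂ - m₁))) * (Set.Ico (max t₂ m₁) (min t₃ m₂)).indicator (1 : ℝ → ℝ) x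
      + ((1 / (t₃ - t₂)) * (1 / (m₃ - m₂))) * (Set.Ico (max t₂ m₂) (min t₃ m₃)).indicator (1 : ℝ → ℝ) x :=
    uStep_mul t₁ t₂ t₃ m₁ m₂ m₃
  rw [intervalIntegral.integral_congr (g := fun x =>
      ((-1 / (t₂ - t₁)) * (-1 / (m₂ - m₁))) * (Set.Ico (max t₁ m₁) (min t₂ m₂)).indicator (1 : ℝ → ℝ) x
      + ((-1 / (t₂ - t₁)) * (1 / (m₃ - m₂))) * (Set.Ico (max t₁ m₂) (min t₂ m₃)).indicator (1 : ℝ → ℝ) x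
      + ((1 / (t₃ - t₂)) * (-1 / (m₂ - m₁))) * (Set.Ico (max t₂ m₁) (min t₃ m₂)).indicator (1 : ℝ → ℝ) x
      + ((1 / (t₃ - t₂)) * (1 / (m₃ - m₂))) * (Set.Ico (max t₂ m₂) (min t₃ m₃)).indicator (1 : ℝ → ℝ) x)
      (fun x _ => hrw x)]
  have i1 : IntervalIntegrable (fun x => ((-1 / (t₂ - t₁)) * (-1 / (m₂ - m₁))) *
      (Set.Ico (max t₁ m₁) (min t₂ m₂)).indicator (1 : ℝ → ℝ) x) volume 0 1 :=
    (indII _ _).const_mul _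
  have i2 : IntervalIntegrable (fun x => ((-1 / (t₂ - t₁)) * (1 / (m₃ - m₂))) *
      (Set.Ico (max t₁ m₂) (min t₂ m₃)).indicator (1 : ℝ → ℝ) x) volume 0 1 :=
    (indII _ _).const_mul _
  have i3 : IntervalIntegrable (fun x => ((1 / (t₃ - t₂)) * (-1 / (m₂ - m₁))) *
      (Set.Ico (max t₂ m₁) (min t₃ m₂)).indicator (1 : ℝ → ℝ) x) volume 0 1 :=
    (indII _ _).const_mul _
  have i4 : IntervalIntegrable (fun x => ((1 / (t₃ - t₂)) * (1 / (m₃ - m₂))) *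
      (Set.Ico (max t₂ m₂) (min t₃ m₃)).indicator (1 : ℝ → ℝ) x) volume 0 1 :=
    (indII _ _).const_mul _
  rw [intervalIntegral.integral_add ((i1.add i2).add i3) i4,
    intervalIntegral.integral_add (i1.add i2) i3,
    intervalIntegral.integral_add i1 i2,
    intervalIntegral.integral_const_mul, intervalIntegral.integral_const_mul,
    intervalIntegral.integral_const_mul, intervalIntegral.integral_const_mul,
    intInd _ _ (le_trans h1 (le_max_left _ _)) (le_trans (min_le_left _ _) h3),
    intInd _ _ (le_trans h1 (le_max_left _ _)) (le_trans (min_le_left _ _) h3),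
    intInd _ _ (le_trans h2 (le_max_left _ _)) (le_trans (min_le_right _ _) h7),
    intInd _ _ (le_trans h2 (le_max_left _ _)) (le_trans (min_le_left _ _) h4)]
  unfold Fq ov
  ring

lemma sum_ite_count (n k₁ k₂ l₁ l₂ : ℕ) (hk : 1 ≤ k₁) (hM : k₂ ≤ n + 1) (x : ℝ) :
    (∑ m ∈ Finset.Ico 1 (n + 1), if (k₁ ≤ m ∧ m < k₂) ∧ (l₁ ≤ m ∧ m < l₂) then x else 0)
      = ((Finset.Ico (max k₁ l₁) (min k₂ l₂)).card : ℝ) * x := by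
  have h : ∀ m, (if (k₁ ≤ m ∧ m < k₂) ∧ (l₁ ≤ m ∧ m < l₂) then x else 0)
      = if m ∈ Finset.Ico (max k₁ l₁) (min k₂ l₂) then x else 0 := by
    intro m
    refine if_congr ?_ rfl rfl
    rw [Finset.mem_Ico, max_le_iff, lt_min_iff]
    tauto
  simp only [h]
  rw [Finset.sum_ite_mem, Finset.Ico_inter_Ico, Finset.sum_const, nsmul_eq_mul]
  rw [max_eq_right (le_trans hk (le_max_left _ _)), min_eq_right (le_trans (min_le_left _ _) hM)]

lemma cast_card_Ico (K M : ℕ) : ((Finset.Ico K M).card : ℝ) = max 0 ((M : ℝ) - K) := by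
  rw [Nat.card_Ico]
  rcases le_total K M with h | h
  · rw [Nat.cast_sub h, max_eq_right (by simp [h] : (0:ℝ) ≤ (M:ℝ) - K)]
  · rw [Nat.sub_eq_zero_of_le h, max_eq_left (by simp [h] : (M:ℝ) - K ≤ 0)]
    simp

lemma term_eq (n : ℝ) (A B C D : ℝ) (hn : 0 < n) (hAB : A < B) (hCD : C < D) :
    max 0 (min B D - max A C) * (Real.sqrt n / (B - A) * (Real.sqrt n / (D - C)))
    = ov ((A-1)/n) ((B-1)/n) ((C-1)/n) ((D-1)/n) / ((B-1)/n - (A-1)/n) / ((D-1)/n - (C-1)/n) := by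
  have hs : Real.sqrt n / (B - A) * (Real.sqrt n / (D - C)) = n / ((B - A) * (D - C)) := by
    rw [div_mul_div_comm, Real.mul_self_sqrt hn.le]
  unfold ov
  have h1 : min ((B-1)/n) ((D-1)/n) = (min B D - 1)/n := by
    rw [min_div_div_right hn.le, min_sub_sub_right]
  have h2 : max ((A-1)/n) ((C-1)/n) = (max A C - 1)/n := by
    rw [max_div_div_right hn.le, max_sub_sub_right]
  rw [h1, h2, show (min B D - 1)/n - (max A C - 1)/n = (min B D - max A C)/n by ring,
    show max (0:ℝ) ((min B D - max A C)/n) = max 0 (min B D - max A C) / n by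
      rw [← max_div_div_right hn.le, zero_div],
    show (B-1)/n - (A-1)/n = (B-A)/n by ring, show (D-1)/n - (C-1)/n = (D-C)/n by ring, hs]
  have hB : B - A ≠ 0 := sub_ne_zero_of_ne hAB.ne'
  have hD : D - C ≠ 0 := sub_ne_zero_of_ne hCD.ne'
  field_simp

lemma sum_fin_shift (n : ℕ) (G : ℕ → ℝ) :
    (∑ j : Fin n, G ((j : ℕ) + 1)) = ∑ m ∈ Finset.Ico 1 (n + 1), G m := by
  rw [Finset.sum_Ico_eq_sum_range]
  simp only [Nat.add_sub_cancel]
  rw [← Fin.sum_univ_eq_sum_range (fun j => G (1 + j)) n]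
  exact Finset.sum_congr rfl fun j _ => by rw [add_comm]

set_option maxHeartbeats 1000000 in
lemma sum_closed (n : ℕ) (t₁ t₂ t₃ m₁ m₂ m₃ : ℝ) (hn : 0 < n)
    (h12 : kIdx n t₁ < kIdx n t₂) (h23 : kIdx n t₂ < kIdx n t₃)
    (g12 : kIdx n m₁ < kIdx n m₂) (g23 : kIdx n m₂ < kIdx n m₃)
    (hk₂ : kIdx n t₂ ≤ n + 1) (hk₃ : kIdx n t₃ ≤ n + 1) :
    (∑ j, uVec n t₁ t₂ t₃ j * uVec n m₁ m₂ m₃ j) =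
      Fq (((kIdx n t₁ : ℝ) - 1) / n) (((kIdx n t₂ : ℝ) - 1) / n) (((kIdx n t₃ : ℝ) - 1) / n)
        (((kIdx n m₁ : ℝ) - 1) / n) (((kIdx n m₂ : ℝ) - 1) / n)
        (((kIdx n m₃ : ℝ) - 1) / n) := by
  set k₁ := kIdx n t₁ with hk1d
  set k₂ := kIdx n t₂ with hk2d
  set k₃ := kIdx n t₃ with hk3d
  set l₁ := kIdx n m₁ with hl1d
  set l₂ := kIdx n m₂ with hl2d
  set l₃ := kIdx n m₃ with hl3d
  set aa : ℝ := -Real.sqrt n / ((k₂ : ℝ) - (k₁ : ℝ)) with haa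
  set bb : ℝ := Real.sqrt n / ((k₃ : ℝ) - (k₂ : ℝ)) with hbb
  set cc : ℝ := -Real.sqrt n / ((l₂ : ℝ) - (l₁ : ℝ)) with hcc
  set dd : ℝ := Real.sqrt n / ((l₃ : ℝ) - (l₂ : ℝ)) with hdd
  have step1 : (∑ j, uVec n t₁ t₂ t₃ j * uVec n m₁ m₂ m₃ j) =
      ∑ m ∈ Finset.Ico 1 (n + 1),
        ((if k₁ ≤ m ∧ m < k₂ then aa else if k₂ ≤ m ∧ m < k₃ then bb else 0) *
         (if l₁ ≤ m ∧ m < l₂ then cc else if l₂ ≤ m ∧ m < l₃ then dd else 0)) := by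
    rw [← sum_fin_shift n (fun m =>
        ((if k₁ ≤ m ∧ m < k₂ then aa else if k₂ ≤ m ∧ m < k₃ then bb else 0) *
         (if l₁ ≤ m ∧ m < l₂ then cc else if l₂ ≤ m ∧ m < l₃ then dd else 0)))]
    exact Finset.sum_congr rfl fun j _ => by simp only [uVec]; rfl
  rw [step1]
  have expand : ∀ m ∈ Finset.Ico 1 (n + 1),
      ((if k₁ ≤ m ∧ m < k₂ then aa else if k₂ ≤ m ∧ m < k₃ then bb else 0) *
       (if l₁ ≤ m ∧ m < l₂ then cc else if l₂ ≤ m ∧ m < l₃ then dd else 0)) =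
      (if (k₁ ≤ m ∧ m < k₂) ∧ (l₁ ≤ m ∧ m < l₂) then aa * cc else 0)
      + (if (k₁ ≤ m ∧ m < k₂) ∧ (l₂ ≤ m ∧ m < l₃) then aa * dd else 0)
      + (if (k₂ ≤ m ∧ m < k₃) ∧ (l₁ ≤ m ∧ m < l₂) then bb * cc else 0)
      + (if (k₂ ≤ m ∧ m < k₃) ∧ (l₂ ≤ m ∧ m < l₃) then bb * dd else 0) := by
    intro m _
    have A : (if k₁ ≤ m ∧ m < k₂ then aa else if k₂ ≤ m ∧ m < k₃ then bb else 0) =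
        (if k₁ ≤ m ∧ m < k₂ then aa else 0) + (if k₂ ≤ m ∧ m < k₃ then bb else 0) := by
      split_ifs <;> first | ring1 | (exfalso; omega)
    have B : (if l₁ ≤ m ∧ m < l₂ then cc else if l₂ ≤ m ∧ m < l₃ then dd else 0) =
        (if l₁ ≤ m ∧ m < l₂ then cc else 0) + (if l₂ ≤ m ∧ m < l₃ then dd else 0) := by
      split_ifs <;> first | ring1 | (exfalso; omega)
    rw [A, B, add_mul, mul_add, mul_add, ite_zero_mul_ite_zero, ite_zero_mul_ite_zero,
      ite_zero_mul_ite_zero, ite_zero_mul_ite_zero]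
    ring
  rw [Finset.sum_congr rfl expand, Finset.sum_add_distrib, Finset.sum_add_distrib,
    Finset.sum_add_distrib,
    sum_ite_count n k₁ k₂ l₁ l₂ (Nat.le_add_left 1 _) hk₂ (aa * cc),
    sum_ite_count n k₁ k₂ l₂ l₃ (Nat.le_add_left 1 _) hk₂ (aa * dd),
    sum_ite_count n k₂ k₃ l₁ l₂ (Nat.le_add_left 1 _) hk₃ (bb * cc),
    sum_ite_count n k₂ k₃ l₂ l₃ (Nat.le_add_left 1 _) hk₃ (bb * dd),
    cast_card_Ico, cast_card_Ico, cast_card_Ico, cast_card_Ico]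
  push_cast
  have hnR : (0 : ℝ) < (n : ℝ) := by exact_mod_cast hn
  have e11 := term_eq (n : ℝ) (k₁ : ℝ) (k₂ : ℝ) (l₁ : ℝ) (l₂ : ℝ) hnR
    (by exact_mod_cast h12) (by exact_mod_cast g12)
  have e12 := term_eq (n : ℝ) (k₁ : ℝ) (k₂ : ℝ) (l₂ : ℝ) (l₃ : ℝ) hnR
    (by exact_mod_cast h12) (by exact_mod_cast g23)
  have e21 := term_eq (n : ℝ) (k₂ : ℝ) (k₃ : ℝ) (l₁ : ℝ) (l₂ : ℝ) hnR
    (by exact_mod_cast h23) (by exact_mod_cast g12)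
  have e22 := term_eq (n : ℝ) (k₂ : ℝ) (k₃ : ℝ) (l₂ : ℝ) (l₃ : ℝ) hnR
    (by exact_mod_cast h23) (by exact_mod_cast g23)
  unfold Fq at *
  rw [haa, hbb, hcc, hdd]
  linear_combination e11 - e12 - e21 + e22

lemma ov_nonneg (a b c d : ℝ) : 0 ≤ ov a b c d := le_max_left _ _

lemma ov_le_one (a b c d : ℝ) (h1 : 0 ≤ a) (h2 : b ≤ 1) : ov a b c d ≤ 1 := by
  unfold ov
  have u1 : min b d ≤ b := min_le_left _ _
  have u2 : a ≤ max a c := le_max_left _ _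
  exact max_le (by norm_num) (by linarith)

lemma ov_lip (a b c d a' b' c' d' δ : ℝ) (h1 : |a - a'| ≤ δ) (h2 : |b - b'| ≤ δ)
    (h3 : |c - c'| ≤ δ) (h4 : |d - d'| ≤ δ) : |ov a b c d - ov a' b' c' d'| ≤ 2 * δ := by
  unfold ov
  have k1 : |max 0 (min b d - max a c) - max 0 (min b' d' - max a' c')| ≤
      max |(0:ℝ) - 0| |(min b d - max a c) - (min b' d' - max a' c')| :=
    abs_max_sub_max_le_max _ _ _ _
  have k2 : |(min b d - max a c) - (min b' d' - max a' c')| ≤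
      |min b d - min b' d'| + |max a c - max a' c'| := by
    calc |(min b d - max a c) - (min b' d' - max a' c')|
        = |(min b d - min b' d') - (max a c - max a' c')| := by ring_nf
      _ ≤ |min b d - min b' d'| + |max a c - max a' c'| := abs_sub _ _
  have k3 : |min b d - min b' d'| ≤ δ :=
    le_trans (abs_min_sub_min_le_max _ _ _ _) (max_le h2 h4)
  have k4 : |max a c - max a' c'| ≤ δ :=
    le_trans (abs_max_sub_max_le_max _ _ _ _) (max_le h1 h3)
  have k5 : max |(0:ℝ) - 0| |(min b d - max a c) - (min b' d' - max a' c')| =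
      |(min b d - max a c) - (min b' d' - max a' c')| := by
    rw [sub_self, abs_zero]
    exact max_eq_right (abs_nonneg _)
  rw [k5] at k1
  linarith

lemma term_lip (ep δ a b c d a' b' c' d' : ℝ) (hep : 0 < ep) (hδ : 0 ≤ δ)
    (ha0 : 0 ≤ a) (hb1 : b ≤ 1) (hc0 : 0 ≤ c) (hd1 : d ≤ 1)
    (ha0' : 0 ≤ a') (hb1' : b' ≤ 1) (hc0' : 0 ≤ c') (hd1' : d' ≤ 1)
    (hab : ep ≤ b - a) (hcd : ep ≤ d - c) (hab' : ep ≤ b' - a') (hcd' : ep ≤ d' - c')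
    (h1 : |a - a'| ≤ δ) (h2 : |b - b'| ≤ δ) (h3 : |c - c'| ≤ δ) (h4 : |d - d'| ≤ δ) :
    |ov a b c d / (b - a) / (d - c) - ov a' b' c' d' / (b' - a') / (d' - c')| ≤
      (2 / ep ^ 2 + 4 / ep ^ 4) * δ := by
  have hba : (0:ℝ) < b - a := lt_of_lt_of_le hep hab
  have hdc : (0:ℝ) < d - c := lt_of_lt_of_le hep hcd
  have hba' : (0:ℝ) < b' - a' := lt_of_lt_of_le hep hab'
  have hdc' : (0:ℝ) < d' - c' := lt_of_lt_of_le hep hcd'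
  set O := ov a b c d with hO
  set O' := ov a' b' c' d' with hO'
  set P := (b - a) * (d - c) with hPd
  set P' := (b' - a') * (d' - c') with hP'd
  have hba1 : b - a ≤ 1 := by linarith
  have hdc1 : d - c ≤ 1 := by linarith
  have hba1' : b' - a' ≤ 1 := by linarith
  have hdc1' : d' - c' ≤ 1 := by linarith
  have hP : ep ^ 2 ≤ P := by rw [hPd]; nlinarith
  have hP' : ep ^ 2 ≤ P' := by rw [hP'd]; nlinarith
  have hep2 : (0:ℝ) < ep ^ 2 := by positivity
  have hep4 : (0:ℝ) < ep ^ 4 := by positivity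
  have hPpos : 0 < P := lt_of_lt_of_le hep2 hP
  have hP'pos : 0 < P' := lt_of_lt_of_le hep2 hP'
  have hO'0 : 0 ≤ O' := ov_nonneg _ _ _ _
  have hO'1 : O' ≤ 1 := ov_le_one _ _ _ _ ha0' hb1'
  have hOO' : |O - O'| ≤ 2 * δ := ov_lip _ _ _ _ _ _ _ _ _ h1 h2 h3 h4
  have u1 : |(b - a) - (b' - a')| ≤ 2 * δ := by
    calc |(b - a) - (b' - a')| = |(b - b') - (a - a')| := by ring_nf
      _ ≤ |b - b'| + |a - a'| := abs_sub _ _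
      _ ≤ 2 * δ := by linarith
  have u2 : |(d - c) - (d' - c')| ≤ 2 * δ := by
    calc |(d - c) - (d' - c')| = |(d - d') - (c - c')| := by ring_nf
      _ ≤ |d - d'| + |c - c'| := abs_sub _ _
      _ ≤ 2 * δ := by linarith
  have hPP' : |P' - P| ≤ 4 * δ := by
    have expand : P' - P = -(((b - a) - (b' - a')) * (d - c)) -
        (b' - a') * ((d - c) - (d' - c')) := by rw [hPd, hP'd]; ring
    rw [expand]
    calc |(-(((b - a) - (b' - a')) * (d - c))) - (b' - a') * ((d - c) - (d' - c'))|
        ≤ |(-(((b - a) - (b' - a')) * (d - c)))| + |(b' - a') * ((d - c) - (d' - c'))| :=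
          abs_sub _ _
      _ = |((b - a) - (b' - a'))| * |d - c| + |b' - a'| * |(d - c) - (d' - c')| := by
          rw [abs_neg, abs_mul, abs_mul]
      _ ≤ (2 * δ) * 1 + 1 * (2 * δ) := by
          apply add_le_add
          · apply mul_le_mul u1 (by rw [abs_of_pos hdc]; exact hdc1) (abs_nonneg _) (by linarith)
          · apply mul_le_mul (by rw [abs_of_pos hba']; exact hba1') u2 (abs_nonneg _)
              (by norm_num)
      _ = 4 * δ := by ring
  have key : O / (b - a) / (d - c) - O' / (b' - a') / (d' - c') =
      (O - O') / P + O' * (P' - P) / (P * P') := by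
    rw [hPd, hP'd]
    field_simp
    ring
  rw [key]
  have hPP4 : ep ^ 4 ≤ P * P' := by
    calc ep ^ 4 = ep ^ 2 * ep ^ 2 := by ring
      _ ≤ P * P' := mul_le_mul hP hP' hep2.le hPpos.le
  calc |(O - O') / P + O' * (P' - P) / (P * P')|
      ≤ |(O - O') / P| + |O' * (P' - P) / (P * P')| := abs_add_le _ _
    _ = |O - O'| / P + |O'| * |P' - P| / (P * P') := by
        rw [abs_div, abs_of_pos hPpos, abs_div, abs_mul, abs_of_pos (mul_pos hPpos hP'pos)]
    _ ≤ (2 * δ) / ep ^ 2 + (1 * (4 * δ)) / ep ^ 4 := by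
        apply add_le_add
        · exact div_le_div₀ (by positivity) hOO' hep2 hP
        · apply div_le_div₀ (by positivity) _ hep4 hPP4
          apply mul_le_mul (by rwa [abs_of_nonneg hO'0]) hPP' (abs_nonneg _) (by norm_num)
    _ = (2 / ep ^ 2 + 4 / ep ^ 4) * δ := by ring

lemma Fq_lip (ep δ a b c d e f a' b' c' d' e' f' : ℝ) (hep : 0 < ep) (hδ : 0 ≤ δ)
    (ha0 : 0 ≤ a) (hc1 : c ≤ 1) (hd0 : 0 ≤ d) (hf1 : f ≤ 1)
    (ha0' : 0 ≤ a') (hc1' : c' ≤ 1) (hd0' : 0 ≤ d') (hf1' : f' ≤ 1)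
    (s1 : ep ≤ b - a) (s2 : ep ≤ c - b) (s3 : ep ≤ e - d) (s4 : ep ≤ f - e)
    (s1' : ep ≤ b' - a') (s2' : ep ≤ c' - b') (s3' : ep ≤ e' - d') (s4' : ep ≤ f' - e')
    (q1 : |a - a'| ≤ δ) (q2 : |b - b'| ≤ δ) (q3 : |c - c'| ≤ δ)
    (q4 : |d - d'| ≤ δ) (q5 : |e - e'| ≤ δ) (q6 : |f - f'| ≤ δ) :
    |Fq a b c d e f - Fq a' b' c' d' e' f'| ≤ (8 / ep ^ 2 + 16 / ep ^ 4) * δ := by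
  have T1 := term_lip ep δ a b d e a' b' d' e' hep hδ ha0 (by linarith) hd0 (by linarith)
    ha0' (by linarith) hd0' (by linarith) s1 s3 s1' s3' q1 q2 q4 q5
  have T2 := term_lip ep δ a b e f a' b' e' f' hep hδ ha0 (by linarith) (by linarith) hf1
    ha0' (by linarith) (by linarith) hf1' s1 s4 s1' s4' q1 q2 q5 q6
  have T3 := term_lip ep δ b c d e b' c' d' e' hep hδ (by linarith) hc1 hd0 (by linarith)
    (by linarith) hc1' hd0' (by linarith) s2 s3 s2' s3' q2 q3 q4 q5
  have T4 := term_lip ep δ b c e f b' c' e' f' hep hδ (by linarith) hc1 (by linarith) hf1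
    (by linarith) hc1' (by linarith) hf1' s2 s4 s2' s4' q2 q3 q5 q6
  set D1 := ov a b d e / (b - a) / (e - d) - ov a' b' d' e' / (b' - a') / (e' - d') with hD1
  set D2 := ov a b e f / (b - a) / (f - e) - ov a' b' e' f' / (b' - a') / (f' - e') with hD2
  set D3 := ov b c d e / (c - b) / (e - d) - ov b' c' d' e' / (c' - b') / (e' - d') with hD3
  set D4 := ov b c e f / (c - b) / (f - e) - ov b' c' e' f' / (c' - b') / (f' - e') with hD4
  have expand : Fq a b c d e f - Fq a' b' c' d' e' f' = D1 - D2 - D3 + D4 := by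
    rw [hD1, hD2, hD3, hD4]; unfold Fq; ring
  rw [expand]
  have tri : |D1 - D2 - D3 + D4| ≤ |D1| + |D2| + |D3| + |D4| := by
    calc |D1 - D2 - D3 + D4| ≤ |D1 - D2 - D3| + |D4| := abs_add_le _ _
      _ ≤ |D1 - D2| + |D3| + |D4| := by linarith [abs_sub (D1 - D2) D3]
      _ ≤ |D1| + |D2| + |D3| + |D4| := by linarith [abs_sub D1 D2]
  have final : |D1| + |D2| + |D3| + |D4| ≤ (8 / ep ^ 2 + 16 / ep ^ 4) * δ := by
    have : (8 / ep ^ 2 + 16 / ep ^ 4) * δ = 4 * ((2 / ep ^ 2 + 4 / ep ^ 4) * δ) := by ring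
    rw [this]
    linarith
  linarith

lemma kIdx_cast (n : ℕ) (t : ℝ) : ((kIdx n t : ℝ) - 1) = (⌊(n : ℝ) * t⌋₊ : ℝ) := by
  unfold kIdx; push_cast; ring

lemma floor_bounds (n : ℕ) (t : ℝ) (hn : 0 < n) (ht : 0 ≤ t) :
    ((kIdx n t : ℝ) - 1) / n ≤ t ∧ t - 1 / n ≤ ((kIdx n t : ℝ) - 1) / n := by
  have hnR : (0:ℝ) < n := by exact_mod_cast hn
  rw [kIdx_cast]
  have h2 : ((⌊(n:ℝ)*t⌋₊ : ℝ)) ≤ (n:ℝ) * t := Nat.floor_le (by positivity)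
  have h3 : (n:ℝ) * t < (⌊(n:ℝ)*t⌋₊ : ℝ) + 1 := Nat.lt_floor_add_one _
  constructor
  · rw [div_le_iff₀ hnR]; linarith
  · rw [sub_le_iff_le_add, ← add_div, le_div_iff₀ hnR]; linarith

lemma kIdx_lt (n : ℕ) (t u : ℝ) (ht : 0 ≤ t) (h : 2 ≤ (n:ℝ) * (u - t)) :
    kIdx n t < kIdx n u := by
  have A : ((⌊(n:ℝ)*t⌋₊ : ℝ)) ≤ (n:ℝ)*t := Nat.floor_le (by positivity)
  have B : (n:ℝ)*u < (⌊(n:ℝ)*u⌋₊ : ℝ) + 1 := Nat.lt_floor_add_one _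
  have : ((⌊(n:ℝ)*t⌋₊ : ℝ)) < (⌊(n:ℝ)*u⌋₊ : ℝ) := by nlinarith
  have hnat : ⌊(n:ℝ)*t⌋₊ < ⌊(n:ℝ)*u⌋₊ := by exact_mod_cast this
  unfold kIdx; omega

lemma kIdx_le (n : ℕ) (t : ℝ) (ht : t ≤ 1) : kIdx n t ≤ n + 1 := by
  unfold kIdx
  have : ⌊(n:ℝ)*t⌋₊ ≤ n := by
    calc ⌊(n:ℝ)*t⌋₊ ≤ ⌊(n:ℝ)⌋₊ := Nat.floor_le_floor (by nlinarith [Nat.cast_nonneg (α := ℝ) n])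
      _ = n := Nat.floor_natCast n
  omega

lemma kIdx_pos (n : ℕ) (t : ℝ) : 1 ≤ kIdx n t := by unfold kIdx; omega

set_option maxHeartbeats 1600000 in
theorem stmt_17 (ε : ℝ) (hε₀ : 0 < ε) (hε₁ : ε ≤ 1 / 3) :
    ∃ K : ℝ, 0 < K ∧ ∃ N₀ : ℕ, ∀ n : ℕ, N₀ ≤ n →
      ∀ t₁ t₂ t₃ m₁ m₂ m₃ : ℝ,
        0 ≤ t₁ → t₃ ≤ 1 → ε ≤ t₂ - t₁ → ε ≤ t₃ - t₂ →
        0 ≤ m₁ → m₃ ≤ 1 → ε ≤ m₂ - m₁ → ε ≤ m₃ - m₂ →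
        |(∑ j, uVec n t₁ t₂ t₃ j * uVec n m₁ m₂ m₃ j) -
            kappa t₁ t₂ t₃ m₁ m₂ m₃| ≤ K / n := by
  have hε2 : (0:ℝ) < ε / 2 := by linarith
  have hK : (0:ℝ) < 8 / (ε/2) ^ 2 + 16 / (ε/2) ^ 4 :=
    add_pos (div_pos (by norm_num) (pow_pos hε2 2)) (div_pos (by norm_num) (pow_pos hε2 4))
  refine ⟨8 / (ε/2) ^ 2 + 16 / (ε/2) ^ 4, hK, ⌈(2:ℝ)/ε⌉₊ + 1, ?_⟩
  intro n hn t₁ t₂ t₃ m₁ m₂ m₃ ht₁0 ht₃1 hts1 hts2 hm₁0 hm₃1 hms1 hms2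
  have hn0 : 0 < n := lt_of_lt_of_le (Nat.succ_pos _) hn
  have hnR : (0:ℝ) < n := by exact_mod_cast hn0
  have hnge : (2:ℝ)/ε ≤ (n:ℝ) := by
    have h1 : ((⌈(2:ℝ)/ε⌉₊ + 1 : ℕ) : ℝ) ≤ (n:ℝ) := by exact_mod_cast hn
    have h2 := Nat.le_ceil ((2:ℝ)/ε)
    push_cast at h1
    linarith
  have h2ne : 2 ≤ (n:ℝ) * ε := by
    rw [div_le_iff₀ hε₀] at hnge; linarith
  have hinv : 1/(n:ℝ) ≤ ε/2 := by
    rw [div_le_div_iff₀ hnR two_pos]; linarith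
  have h1n : (0:ℝ) ≤ 1/(n:ℝ) := by positivity
  have ht₂0 : 0 ≤ t₂ := by linarith
  have ht₃0 : 0 ≤ t₃ := by linarith
  have ht₂1 : t₂ ≤ 1 := by linarith
  have hm₂0 : 0 ≤ m₂ := by linarith
  have hm₃0 : 0 ≤ m₃ := by linarith
  have hm₂1 : m₂ ≤ 1 := by linarith
  obtain ⟨f1a, f1b⟩ := floor_bounds n t₁ hn0 ht₁0
  obtain ⟨f2a, f2b⟩ := floor_bounds n t₂ hn0 ht₂0
  obtain ⟨f3a, f3b⟩ := floor_bounds n t₃ hn0 ht₃0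
  obtain ⟨g1a, g1b⟩ := floor_bounds n m₁ hn0 hm₁0
  obtain ⟨g2a, g2b⟩ := floor_bounds n m₂ hn0 hm₂0
  obtain ⟨g3a, g3b⟩ := floor_bounds n m₃ hn0 hm₃0
  have k12 : kIdx n t₁ < kIdx n t₂ := kIdx_lt n t₁ t₂ ht₁0 (by nlinarith)
  have k23 : kIdx n t₂ < kIdx n t₃ := kIdx_lt n t₂ t₃ ht₂0 (by nlinarith)
  have l12 : kIdx n m₁ < kIdx n m₂ := kIdx_lt n m₁ m₂ hm₁0 (by nlinarith)
  have l23 : kIdx n m₂ < kIdx n m₃ := kIdx_lt n m₂ m₃ hm₂0 (by nlinarith)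
  have k2le : kIdx n t₂ ≤ n + 1 := kIdx_le n t₂ ht₂1
  have k3le : kIdx n t₃ ≤ n + 1 := kIdx_le n t₃ ht₃1
  have s10 : (0:ℝ) ≤ ((kIdx n t₁ : ℝ) - 1)/n := by
    have : (1:ℝ) ≤ (kIdx n t₁ : ℝ) := by exact_mod_cast kIdx_pos n t₁
    apply div_nonneg (by linarith) hnR.le
  have r10 : (0:ℝ) ≤ ((kIdx n m₁ : ℝ) - 1)/n := by
    have : (1:ℝ) ≤ (kIdx n m₁ : ℝ) := by exact_mod_cast kIdx_pos n m₁
    apply div_nonneg (by linarith) hnR.le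
  rw [sum_closed n t₁ t₂ t₃ m₁ m₂ m₃ hn0 k12 k23 l12 l23 k2le k3le,
    kappa_closed t₁ t₂ t₃ m₁ m₂ m₃ ht₁0 ht₂0 ht₂1 ht₃1 hm₁0 hm₂0 hm₂1 hm₃1]
  have main := Fq_lip (ε/2) (1/n)
    (((kIdx n t₁ : ℝ) - 1)/n) (((kIdx n t₂ : ℝ) - 1)/n) (((kIdx n t₃ : ℝ) - 1)/n)
    (((kIdx n m₁ : ℝ) - 1)/n) (((kIdx n m₂ : ℝ) - 1)/n) (((kIdx n m₃ : ℝ) - 1)/n)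
    t₁ t₂ t₃ m₁ m₂ m₃ hε2 h1n
    s10 (by linarith) r10 (by linarith)
    ht₁0 ht₃1 hm₁0 hm₃1
    (by linarith) (by linarith) (by linarith) (by linarith)
    (by linarith) (by linarith) (by linarith) (by linarith)
    (abs_le.mpr ⟨by linarith, by linarith⟩) (abs_le.mpr ⟨by linarith, by linarith⟩)
    (abs_le.mpr ⟨by linarith, by linarith⟩) (abs_le.mpr ⟨by linarith, by linarith⟩)
    (abs_le.mpr ⟨by linarith, by linarith⟩) (abs_le.mpr ⟨by linarith, by linarith⟩)
  have eq2 : (8 / (ε/2) ^ 2 + 16 / (ε/2) ^ 4) / (n:ℝ)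
      = (8 / (ε/2) ^ 2 + 16 / (ε/2) ^ 4) * (1/n) := by ring
  rw [eq2]
  exact main
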